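/- arXiv:1212.6186 — 6 statements merged into one kernel-verified Lean document; each statement's English description precedes it below -/
import Mathlib

section
/- Let k be an algebraically closed field, r ≥ 0 an integer, and X = ℙ(O_{ℙ¹}(−1) ⊕ O_{ℙ¹}^r) the projective bundle over ℙ¹_k with natural projection π : X → ℙ¹. Then the complete linear system |Γ(X, O_X(1) ⊗ π^*O_{ℙ¹}(1))| is base point free, and the only curve contracted by the induced morphism of X is the curve C which is the section of π defined by the projection of O_{ℙ¹}(−1) ⊕ O_{ℙ¹}^r onto its first factor. -/
/-!
Lemma `\ref{Lemma52}` of Cutkosky, "The asymptotic growth of graded linear series on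
arbitrary projective schemes":

Let `k` be an algebraically closed field, `r ≥ 0`, and let
`X = ℙ(O_{ℙ¹}(-1) ⊕ O_{ℙ¹}^r)` with natural projection `π : X → ℙ¹`.  Then the complete
linear system `|Γ(X, O_X(1) ⊗ π^*O_{ℙ¹}(1))|` is base point free, and the only curve
contracted by the induced morphism of `X` is the curve `C` which is the section of `π`
defined by the projection of `O_{ℙ¹}(-1) ⊕ O_{ℙ¹}^r` onto the first factor.

Formalization via the Cox ring (homogeneous coordinate) description of the projective
bundle `X = ℙ(O(-1) ⊕ O^r)` over `ℙ¹`:  `X` is the quotient of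
`{((s,t),(y₀,y₁,…,y_r)) | (s,t) ≠ 0, (y₀,…,y_r) ≠ 0} ⊆ k² × k^{1+r}`
by the torus action `(λ,μ)·((s,t),(y₀,y)) = ((λs, λt), (λμ y₀, μ y))`
(the coordinates `s,t` on the base have bidegree `(1,0)`; `y₀`, corresponding to the
summand `O(-1)`, has bidegree `(1,1)`, and `y₁,…,y_r`, corresponding to `O^r`, have
bidegree `(0,1)`); `k`-points of `X` are exactly the orbits, as `k` is algebraically
closed.  The space `Γ(X, O_X(1) ⊗ π^*O_{ℙ¹}(1))` of sections of bidegree `(1,1)` has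
basis `y₀, s·y₁, t·y₁, …, s·y_r, t·y_r`, so the morphism `φ` induced by the complete
linear system sends (the orbit of) `p = ((s,t),(y₀,y))` to the point of `ℙ^{2r}` with
homogeneous coordinates `coxPhi p = (y₀, (s y₁, t y₁), …, (s y_r, t y_r))`.  The section
`C` of `π` defined by the projection onto the first factor `O(-1)` is the locus
`{y₁ = ⋯ = y_r = 0}`.

The conclusion is:
(i)  (base point freeness) `coxPhi p ≠ 0` for every point `p` of `X`, and
(ii) (`C` is the only contracted curve) `φ` identifies two points of `X` if and only if
     they are equal or both lie on `C`; that is, `φ` is injective off `C` and contracts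
     `C` (and only `C`) to a point.
-/

namespace ArxivGLS

/-- A point of the total space of the Cox construction of `ℙ(O(-1) ⊕ O^r)` over `ℙ¹`:
base coordinates `(s,t)` and fiber coordinates `(y₀, (y₁,…,y_r))`. -/
abbrev CoxPt (k : Type) (r : ℕ) : Type := (k × k) × (k × (Fin r → k))

/-- Two points of the punctured total space lie in the same orbit of the torus action,
i.e. define the same point of `X = ℙ(O(-1) ⊕ O^r)`. -/
def coxEquiv {k : Type} [Field k] {r : ℕ} (p p' : CoxPt k r) : Prop :=
  ∃ lam mu : kˣ,
    p'.1.1 = lam * p.1.1 ∧ p'.1.2 = lam * p.1.2 ∧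
    p'.2.1 = lam * mu * p.2.1 ∧ ∀ i, p'.2.2 i = mu * p.2.2 i

/-- The tuple of values of the basis `y₀, s y₁, t y₁, …, s y_r, t y_r` of the complete
linear system `|Γ(X, O_X(1) ⊗ π^*O_{ℙ¹}(1))|`: the homogeneous coordinates of the image
of `p` under the induced morphism `φ : X → ℙ^{2r}`. -/
def coxPhi {k : Type} [Field k] {r : ℕ} (p : CoxPt k r) : k × (Fin r → k × k) :=
  (p.2.1, fun i => (p.1.1 * p.2.2 i, p.1.2 * p.2.2 i))

/-- Two nonzero tuples of homogeneous coordinates define the same point of `ℙ^{2r}`,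
i.e. they are proportional. -/
def projEq {k : Type} [Field k] {r : ℕ} (w w' : k × (Fin r → k × k)) : Prop :=
  ∃ c : kˣ, w'.1 = c * w.1 ∧
    ∀ i, (w'.2 i).1 = c * (w.2 i).1 ∧ (w'.2 i).2 = c * (w.2 i).2

theorem base_point_free_and_contracts_only_first_factor_section
    (k : Type) [Field k] [IsAlgClosed k] (r : ℕ) :
    -- (i) the complete linear system is base point free
    (∀ p : CoxPt k r, p.1 ≠ 0 → p.2 ≠ 0 → coxPhi p ≠ 0) ∧
    -- (ii) the induced morphism identifies two points iff they are equal in `X`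
    --      or both lie on the section `C = {y₁ = ⋯ = y_r = 0}` of `π` defined by the
    --      projection of `O(-1) ⊕ O^r` onto the first factor; in particular the only
    --      curve contracted by the induced morphism is `C`.
    (∀ p p' : CoxPt k r, p.1 ≠ 0 → p.2 ≠ 0 → p'.1 ≠ 0 → p'.2 ≠ 0 →
      (projEq (coxPhi p) (coxPhi p') ↔
        (coxEquiv p p' ∨ (p.2.2 = 0 ∧ p'.2.2 = 0)))) := by
  constructor
  · -- base point freeness
    rintro ⟨⟨s, t⟩, y0, y⟩ hb hf h
    have hy0 : y0 = 0 := congrArg Prod.fst h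
    have hy : ∀ i, s * y i = 0 ∧ t * y i = 0 := by
      intro i
      have h2 := congrFun (congrArg Prod.snd h) i
      exact ⟨congrArg Prod.fst h2, congrArg Prod.snd h2⟩
    have hyne : y ≠ 0 := by
      intro h0
      exact hf (by simp [Prod.ext_iff, hy0, h0])
    obtain ⟨i, hi⟩ := Function.ne_iff.mp hyne
    simp only [Pi.zero_apply] at hi
    have hs : s = 0 := by
      rcases mul_eq_zero.mp (hy i).1 with h' | h'
      · exact h'
      · exact absurd h' hi
    have ht : t = 0 := by
      rcases mul_eq_zero.mp (hy i).2 with h' | h'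
      · exact h'
      · exact absurd h' hi
    exact hb (by simp [Prod.ext_iff, hs, ht])
  · rintro ⟨⟨s, t⟩, y0, y⟩ ⟨⟨s', t'⟩, y0', y'⟩ hb hf hb' hf'
    have hst : s ≠ 0 ∨ t ≠ 0 := by
      by_contra h
      push_neg at h
      exact hb (by simp [Prod.ext_iff, h.1, h.2])
    have hst' : s' ≠ 0 ∨ t' ≠ 0 := by
      by_contra h
      push_neg at h
      exact hb' (by simp [Prod.ext_iff, h.1, h.2])
    constructor
    · rintro ⟨c, h0, h⟩
      simp only [coxPhi] at h0 h
      by_cases hy : y = 0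
      · -- both points lie on the section C
        right
        refine ⟨hy, funext fun j => ?_⟩
        have h1 := (h j).1
        have h2 := (h j).2
        simp only [hy, Pi.zero_apply, mul_zero] at h1 h2
        rcases hst' with hs' | ht'
        · exact (mul_eq_zero.mp h1).resolve_left hs'
        · exact (mul_eq_zero.mp h2).resolve_left ht'
      · -- the two points are in the same torus orbit
        left
        obtain ⟨i, hi⟩ := Function.ne_iff.mp hy
        simp only [Pi.zero_apply] at hi
        have hi1 := (h i).1
        have hi2 := (h i).2
        have hyi' : y' i ≠ 0 := by
          intro h0'
          rw [h0', mul_zero] at hi1 hi2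
          have hs0 : s = 0 := by
            have h' := (mul_eq_zero.mp hi1.symm).resolve_left c.ne_zero
            exact (mul_eq_zero.mp h').resolve_right hi
          have ht0 : t = 0 := by
            have h' := (mul_eq_zero.mp hi2.symm).resolve_left c.ne_zero
            exact (mul_eq_zero.mp h').resolve_right hi
          rcases hst with h' | h'
          · exact h' hs0
          · exact h' ht0
        have hlam : (c : k) * y i / y' i ≠ 0 :=
          div_ne_zero (mul_ne_zero c.ne_zero hi) hyi'
        have hmu : y' i / y i ≠ 0 := div_ne_zero hyi' hi
        refine ⟨Units.mk0 _ hlam, Units.mk0 _ hmu, ?_, ?_, ?_, ?_⟩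
        · simp only [Units.val_mk0]
          field_simp
          linear_combination hi1
        · simp only [Units.val_mk0]
          field_simp
          linear_combination hi2
        · simp only [Units.val_mk0]
          have hcc : (c : k) * y i / y' i * (y' i / y i) = (c : k) := by
            field_simp
          rw [hcc]
          exact h0
        · intro j
          simp only [Units.val_mk0]
          have key : y' j * y i = y' i * y j := by
            rcases hst with hs | ht
            · have hs'0 : s' ≠ 0 := by
                intro h0'
                rw [h0', zero_mul] at hi1
                exact (mul_ne_zero c.ne_zero (mul_ne_zero hs hi)) hi1.symm
              have hj := (h j).1
              have : s' * (y' j * y i) = s' * (y' i * y j) := by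
                linear_combination y i * hj - y j * hi1
              exact mul_left_cancel₀ hs'0 this
            · have ht'0 : t' ≠ 0 := by
                intro h0'
                rw [h0', zero_mul] at hi2
                exact (mul_ne_zero c.ne_zero (mul_ne_zero ht hi)) hi2.symm
              have hj := (h j).2
              have : t' * (y' j * y i) = t' * (y' i * y j) := by
                linear_combination y i * hj - y j * hi2
              exact mul_left_cancel₀ ht'0 this
          field_simp
          linear_combination key
    · rintro (⟨lam, mu, h1, h2, h3, h4⟩ | ⟨hy, hy'⟩)
      · have h1' : s' = ↑lam * s := h1
        have h2' : t' = ↑lam * t := h2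
        have h3' : y0' = ↑lam * ↑mu * y0 := h3
        have h4' : ∀ i, y' i = ↑mu * y i := h4
        refine ⟨lam * mu, ?_, fun i => ⟨?_, ?_⟩⟩
        · simpa [coxPhi, Units.val_mul] using h3'
        · simp only [coxPhi, Units.val_mul]
          rw [h1', h4' i]; ring
        · simp only [coxPhi, Units.val_mul]
          rw [h2', h4' i]; ring
      · -- both points on C: compare the y0 coordinates
        have hy2 : y = 0 := hy
        have hy'2 : y' = 0 := hy'
        have hy0 : y0 ≠ 0 := by
          intro h0
          exact hf (by simp [Prod.ext_iff, h0, hy2])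
        have hy0' : y0' ≠ 0 := by
          intro h0
          exact hf' (by simp [Prod.ext_iff, h0, hy'2])
        refine ⟨Units.mk0 (y0' / y0) (div_ne_zero hy0' hy0), ?_, fun i => ?_⟩
        · simp only [coxPhi, Units.val_mk0]
          field_simp
        · simp [coxPhi, Units.val_mk0, hy2, hy'2]

end ArxivGLS
end

section
/- Let L be a graded linear series on a projective scheme X over a field k, and suppose q(L) ≥ 0. Then there exist a positive real constant α and a positive integer e such that dim_k L_{en} > α n^{q(L)} for all positive integers n. -/
open AlgebraicGeometry CategoryTheory Opposite TopologicalSpace Filter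

universe u

namespace ArxivGLS

variable (k : Type u) [Field k]

/-- A scheme `X` over `Spec k` equipped with a line bundle `𝓛`, presented by a
Čech cocycle: an open cover `U i` of `X` together with transition units `g i j`
on the double overlaps satisfying the cocycle condition.  A global section of the
`n`-th tensor power `𝓛^n` is then a family `s i ∈ Γ(X, U i)` satisfying
`s i = (g i j)^n * s j` on the overlaps (see `PolarizedScheme.H0`). -/
structure PolarizedScheme where
  /-- the underlying scheme -/
  X : Scheme.{u}
  /-- the structure morphism to `Spec k` -/
  f : X ⟶ Spec (CommRingCat.of k)
  /-- index set of the trivializing open cover of the line bundle -/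
  ι : Type u
  /-- the trivializing open cover -/
  U : ι → X.Opens
  covers : ∀ x, ∃ i, x ∈ U i
  /-- the transition functions of the line bundle -/
  g : ∀ i j, Γ(X, U i ⊓ U j)
  isUnit_g : ∀ i j, IsUnit (g i j)
  g_self : ∀ i, g i i = 1
  cocycle : ∀ i j l,
    (X.presheaf.map (homOfLE (inf_le_left : U i ⊓ U j ⊓ U l ≤ U i ⊓ U j)).op (g i j)) *
      (X.presheaf.map (homOfLE
        (inf_le_inf inf_le_right le_rfl : U i ⊓ U j ⊓ U l ≤ U j ⊓ U l)).op (g j l)) =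
      (X.presheaf.map (homOfLE
        (inf_le_inf inf_le_left le_rfl : U i ⊓ U j ⊓ U l ≤ U i ⊓ U l)).op (g i l))

variable {k}

/-- The `k`-algebra structure on the sections of a scheme over `Spec k`. -/
noncomputable instance (P : PolarizedScheme k) (V : P.X.Opens) : Algebra k Γ(P.X, V) :=
  RingHom.toAlgebra
    ((Scheme.ΓSpecIso (CommRingCat.of k)).inv ≫ P.f.appTop ≫
      P.X.presheaf.map (homOfLE le_top).op).hom

/-- The ambient space in which all the `Γ(X, 𝓛^n)` live: families of local sections
on the trivializing cover. -/
abbrev SecSpace (P : PolarizedScheme k) : Type u := Π i, Γ(P.X, P.U i)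

/-- The set of global sections of `𝓛^n`: families of local sections compatible via
the `n`-th power of the transition cocycle. This is `Γ(X, 𝓛^n)`. -/
def PolarizedScheme.H0 (P : PolarizedScheme k) (n : ℕ) : Set (SecSpace P) :=
  {s | ∀ i j,
    P.X.presheaf.map (homOfLE (inf_le_left : P.U i ⊓ P.U j ≤ P.U i)).op (s i) =
      P.g i j ^ n *
        P.X.presheaf.map (homOfLE (inf_le_right : P.U i ⊓ P.U j ≤ P.U j)).op (s j)}

/-- A graded linear series for the line bundle `𝓛` on `X`: a graded `k`-subalgebra
`L = ⊕ₙ Lₙ` of the section ring `⊕ₙ Γ(X, 𝓛^n)`. Each graded piece is a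
finite-dimensional `k`-vector space since `X` is projective over `k`. -/
structure GradedLinearSeries (P : PolarizedScheme k) where
  /-- the `n`-th graded piece `Lₙ ⊆ Γ(X, 𝓛^n)` -/
  M : ℕ → Submodule k (SecSpace P)
  le_H0 : ∀ n, (M n : Set (SecSpace P)) ⊆ P.H0 n
  one_mem : (1 : SecSpace P) ∈ M 0
  mul_mem : ∀ {m n : ℕ} {x y : SecSpace P}, x ∈ M m → y ∈ M n → x * y ∈ M (m + n)
  finiteDimensional : ∀ n, FiniteDimensional k (M n)

namespace GradedLinearSeries

variable {P : PolarizedScheme k} (G : GradedLinearSeries P)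

/-- A homogeneous element of positive degree `n` of the graded linear series, viewed in
the ambient graded algebra `(⊕ᵢ Γ(X, U i))[T]` (an element `s ∈ Lₙ` is encoded as the
polynomial `s · Tⁿ`, which is compatible with the multiplication of the section ring). -/
def IsHomogeneousOfPosDeg (p : Polynomial (SecSpace P)) : Prop :=
  ∃ n : ℕ, 0 < n ∧ ∃ s ∈ G.M n, p = Polynomial.C s * Polynomial.X ^ n

/-- `σ(L)` : the maximal number of homogeneous elements of positive degree of `L` which
are algebraically independent over `k`. -/
noncomputable def sigma : ℕ :=
  sSup {m : ℕ | ∃ v : Fin m → Polynomial (SecSpace P),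
    (∀ j, G.IsHomogeneousOfPosDeg (v j)) ∧ AlgebraicIndependent k v}

/-- The Kodaira–Iitaka dimension `q(L)`: it is `σ(L) - 1` if `σ(L) > 0`, and
`-∞` if `σ(L) = 0`. -/
noncomputable def kodairaIitakaDim : WithBot ℕ∞ :=
  if sigma G = 0 then ⊥ else ((sigma G - 1 : ℕ) : ℕ∞)

/-- The index `m(L) = [ℤ : G]` where `G` is the subgroup of `ℤ` generated by
`{n | Lₙ ≠ 0}`. -/
noncomputable def gindex : ℕ :=
  (AddSubgroup.closure {z : ℤ | ∃ n : ℕ, (n : ℤ) = z ∧ G.M n ≠ ⊥}).index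

end GradedLinearSeries

end ArxivGLS

namespace ArxivGLS

/-!
Lemma `\ref{LemmaKI}`(3) of Cutkosky, "The asymptotic growth of graded linear series on
arbitrary projective schemes":

If `L` is a graded linear series on a projective scheme `X` over a field `k` with
`q(L) ≥ 0`, then there exist a positive constant `α` and a positive integer `e` such
that `dim_k L_{e n} > α n^{q(L)}` for all positive integers `n`.

Conventions as in `PolarizedScheme` and `GradedLinearSeries`; `q(L) = q ≥ 0` is expressed
by `σ(L) = q + 1`; projectivity over `k` is expressed via properness of the structure
morphism (projective morphisms are not yet available in Mathlib).
-/
lemma aux_pow_mem {k : Type u} [Field k] {P : PolarizedScheme k}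
    (G : GradedLinearSeries P) {d : ℕ} {x : SecSpace P}
    (hx : x ∈ G.M d) (c : ℕ) : x ^ c ∈ G.M (c * d) := by
  induction c with
  | zero => simpa using G.one_mem
  | succ c ih =>
      have h := G.mul_mem ih hx
      rw [pow_succ]
      rw [Nat.succ_mul]
      exact h

lemma aux_prod_mem {k : Type u} [Field k] {P : PolarizedScheme k}
    (G : GradedLinearSeries P) {ι : Type} [DecidableEq ι] (t : Finset ι)
    (f : ι → SecSpace P) (nf : ι → ℕ) (hf : ∀ i ∈ t, f i ∈ G.M (nf i)) :
    (∏ i ∈ t, f i) ∈ G.M (∑ i ∈ t, nf i) := by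
  induction t using Finset.induction with
  | empty => simpa using G.one_mem
  | @insert a t ha ih =>
      rw [Finset.prod_insert ha, Finset.sum_insert ha]
      exact G.mul_mem (hf _ (Finset.mem_insert_self _ _))
        (ih fun i hi => hf i (Finset.mem_insert_of_mem hi))

set_option maxHeartbeats 1000000 in
theorem const_mul_pow_lt_dim
    {k : Type u} [Field k] (P : PolarizedScheme k) [IsProper P.f]
    (G : GradedLinearSeries P) (q : ℕ) (hq : G.sigma = q + 1) :
    ∃ α : ℝ, 0 < α ∧ ∃ e : ℕ, 0 < e ∧ ∀ n : ℕ, 1 ≤ n →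
      α * (n : ℝ) ^ q < (Module.finrank k (G.M (e * n)) : ℝ) := by
  classical
  -- Extract `q+1` algebraically independent homogeneous elements.
  set S : Set ℕ := {m : ℕ | ∃ v : Fin m → Polynomial (SecSpace P),
    (∀ j, G.IsHomogeneousOfPosDeg (v j)) ∧ AlgebraicIndependent k v} with hS
  have hsup : sSup S = q + 1 := hq
  have hbdd : BddAbove S := by
    by_contra h
    rw [csSup_of_not_bddAbove h, csSup_empty] at hsup
    simp at hsup
  have hne : S.Nonempty := by
    by_contra h
    rw [Set.not_nonempty_iff_eq_empty] at h
    rw [h, csSup_empty] at hsup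
    simp at hsup
  have hmem : q + 1 ∈ S := hsup ▸ Nat.sSup_mem hne hbdd
  obtain ⟨v, hvh, hvi⟩ := hmem
  -- For each `j`, `v j = C (s j) * X ^ (d j)` with `s j ∈ M (d j)`, `d j > 0`.
  choose d hd s hs hvs using hvh
  -- `e` : common degree.
  set e : ℕ := ∏ j, d j with he_def
  have he : 0 < e := Finset.prod_pos fun j _ => hd j
  set m : Fin (q + 1) → ℕ := fun j => ∏ j' ∈ Finset.univ.erase j, d j' with hm_def
  have hdm : ∀ j, d j * m j = e := fun j => Finset.mul_prod_erase _ _ (Finset.mem_univ j)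
  have hm : ∀ j, 0 < m j := fun j => Finset.prod_pos fun j' _ => hd j'
  refine ⟨((2 * q.factorial : ℕ) : ℝ)⁻¹, by positivity, e, he, ?_⟩
  intro n hn
  -- the index type of our linearly independent family
  have hcard : Fintype.card (Sym (Fin (q + 1)) n) = (q + n).choose n := by
    rw [Sym.card_sym_eq_choose, Fintype.card_fin]
    congr 1
    omega
  -- exponent vectors
  set D : Sym (Fin (q + 1)) n → (Fin (q + 1) →₀ ℕ) :=
    fun a => Finsupp.equivFunOnFinite.symm (fun j => m j * Multiset.count j (a : Multiset _))
    with hD_def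
  have hDapp : ∀ a j, D a j = m j * Multiset.count j (a : Multiset _) := fun a j => rfl
  have hDinj : Function.Injective D := by
    intro a b hab
    refine Subtype.ext (Multiset.ext.mpr fun j => ?_)
    have := congrArg (fun f => f j) hab
    simp only [hDapp] at this
    exact Nat.eq_of_mul_eq_mul_left (hm j) this
  -- the elements of `M (e * n)`
  set u : Sym (Fin (q + 1)) n → SecSpace P :=
    fun a => ∏ j, s j ^ (m j * Multiset.count j (a : Multiset _)) with hu_def
  have hsum : ∀ a : Sym (Fin (q + 1)) n,
      ∑ j, d j * (m j * Multiset.count j (a : Multiset _)) = e * n := by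
    intro a
    have h1 : ∀ j ∈ Finset.univ,
        d j * (m j * Multiset.count j (a : Multiset _)) =
          e * Multiset.count j (a : Multiset _) := by
      intro j _
      rw [← Nat.mul_assoc, hdm j]
    rw [Finset.sum_congr rfl h1, ← Finset.mul_sum]
    have hc : ∑ j, Multiset.count j (a : Multiset (Fin (q + 1))) = n := by
      rw [Multiset.sum_count_eq_card (fun x _ => Finset.mem_univ x)]
      exact a.2
    rw [hc]
  have humem : ∀ a, u a ∈ G.M (e * n) := by
    intro a
    have h := aux_prod_mem G Finset.univ
      (fun j => s j ^ (m j * Multiset.count j (a : Multiset _)))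
      (fun j => (m j * Multiset.count j (a : Multiset _)) * d j)
      (fun j _ => aux_pow_mem G (hs j) _)
    have h2 : ∑ j, (m j * Multiset.count j (a : Multiset _)) * d j = e * n := by
      rw [← hsum a]
      exact Finset.sum_congr rfl fun j _ => Nat.mul_comm _ _
    rwa [h2] at h
  -- the linear map `w ↦ C w * X ^ (e * n)`
  set φ : SecSpace P →ₗ[k] Polynomial (SecSpace P) :=
    { toFun := fun w => Polynomial.C w * Polynomial.X ^ (e * n)
      map_add' := fun x y => by
        show Polynomial.C (x + y) * Polynomial.X ^ (e * n) = _
        rw [map_add, add_mul]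
      map_smul' := fun c x => by
        show Polynomial.C (c • x) * Polynomial.X ^ (e * n) = _
        rw [RingHom.id_apply, ← Polynomial.smul_C, smul_mul_assoc] } with hφ_def
  -- key identity
  have hkey : ∀ a : Sym (Fin (q + 1)) n,
      MvPolynomial.aeval v (MvPolynomial.monomial (D a) (1 : k)) = φ (u a) := by
    intro a
    rw [MvPolynomial.aeval_monomial, map_one, one_mul, Finsupp.prod_pow]
    have h1 : ∀ j ∈ Finset.univ, v j ^ (D a) j =
        Polynomial.C (s j ^ (m j * Multiset.count j (a : Multiset _))) *
          Polynomial.X ^ (d j * (m j * Multiset.count j (a : Multiset _))) := by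
      intro j _
      rw [hvs j, hDapp, mul_pow, ← Polynomial.C_pow, ← pow_mul]
    rw [Finset.prod_congr rfl h1, Finset.prod_mul_distrib, ← map_prod,
      Finset.prod_pow_eq_pow_sum, hsum a]
    rfl
  -- linear independence
  have hli0 : LinearIndependent k
      (fun dd : Fin (q + 1) →₀ ℕ => (MvPolynomial.monomial dd (1 : k))) := by
    have := (MvPolynomial.basisMonomials (Fin (q + 1)) k).linearIndependent
    rwa [MvPolynomial.coe_basisMonomials] at this
  have hinj : Function.Injective
      ((MvPolynomial.aeval v : MvPolynomial (Fin (q + 1)) k →ₐ[k]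
        Polynomial (SecSpace P))) := hvi
  have hli1 : LinearIndependent k
      (fun dd : Fin (q + 1) →₀ ℕ =>
        MvPolynomial.aeval v (MvPolynomial.monomial dd (1 : k))) :=
    hli0.map' (MvPolynomial.aeval v).toLinearMap (LinearMap.ker_eq_bot.mpr hinj)
  have hli2 : LinearIndependent k
      (fun a : Sym (Fin (q + 1)) n =>
        MvPolynomial.aeval v (MvPolynomial.monomial (D a) (1 : k))) :=
    hli1.comp D hDinj
  have hli3 : LinearIndependent k (φ ∘ u) := by
    have hfun : (fun a : Sym (Fin (q + 1)) n =>
        MvPolynomial.aeval v (MvPolynomial.monomial (D a) (1 : k))) = φ ∘ u :=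
      funext fun a => hkey a
    rwa [hfun] at hli2
  have hli4 : LinearIndependent k u := hli3.of_comp φ
  -- move into the submodule
  set u' : Sym (Fin (q + 1)) n → (G.M (e * n)) := fun a => ⟨u a, humem a⟩ with hu'_def
  have hli5 : LinearIndependent k u' := by
    apply LinearIndependent.of_comp (G.M (e * n)).subtype
    have : ((G.M (e * n)).subtype ∘ u') = u := funext fun a => rfl
    rwa [this]
  haveI : FiniteDimensional k (G.M (e * n)) := G.finiteDimensional _
  have hrank : (q + n).choose n ≤ Module.finrank k (G.M (e * n)) := by
    rw [← hcard]
    exact hli5.fintype_card_le_finrank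
  -- numerics
  have h1 : n ^ q ≤ q.factorial * (q + n).choose n := by
    calc n ^ q ≤ n.ascFactorial q := Nat.pow_succ_le_ascFactorial n q
    _ = q.factorial * (n + q - 1).choose q := Nat.ascFactorial_eq_factorial_mul_choose' n q
    _ ≤ q.factorial * (q + n).choose q :=
        Nat.mul_le_mul_left _ (Nat.choose_le_choose q (by omega))
    _ = q.factorial * (q + n).choose n := by
        congr 1
        have h := Nat.choose_symm (Nat.le_add_left n q)
        simpa using h
  have hcpos : 0 < (q + n).choose n := Nat.choose_pos (Nat.le_add_left n q)
  have h2 : ((n : ℝ)) ^ q < (2 * q.factorial : ℕ) * ((q + n).choose n : ℝ) := by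
    have hA : ((n : ℝ)) ^ q ≤ (q.factorial : ℝ) * ((q + n).choose n : ℝ) := by
      exact_mod_cast h1
    have hB : (q.factorial : ℝ) * ((q + n).choose n : ℝ) <
        (2 * q.factorial : ℕ) * ((q + n).choose n : ℝ) := by
      have hq1 : (1 : ℝ) ≤ (q.factorial : ℝ) := by exact_mod_cast q.factorial_pos
      have hc1 : (1 : ℝ) ≤ ((q + n).choose n : ℝ) := by exact_mod_cast hcpos
      push_cast
      nlinarith
    linarith
  have hpos : (0 : ℝ) < ((2 * q.factorial : ℕ) : ℝ) := by positivity
  have h3 : ((2 * q.factorial : ℕ) : ℝ)⁻¹ * (n : ℝ) ^ q < ((q + n).choose n : ℝ) := by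
    rw [inv_mul_lt_iff₀ hpos]
    linarith [h2]
  calc ((2 * q.factorial : ℕ) : ℝ)⁻¹ * (n : ℝ) ^ q < ((q + n).choose n : ℝ) := h3
  _ ≤ (Module.finrank k (G.M (e * n)) : ℝ) := by exact_mod_cast hrank

end ArxivGLS
end

section
/- With σ as defined from the sequence (i_j): for every a ∈ ℕ and every positive integer r, and for all m > 0 and ε > 0, there exists a positive integer n of the form n = a + br with b ∈ ℕ such that n > m and |σ(n)/n − 1/2| < ε. -/
/-!
Lemma 2.? (Lemma `\ref{Lemma1}` of Cutkosky, "The asymptotic growth of graded linear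
series on arbitrary projective schemes").

Fix a sequence of positive integers `(i_j)_{j ≥ 1}` with `i 1 = 2`, each `i (j+1)` even and
`i (j+1) > 2^j * i j`.  Define `σ : ℤ₊ → ℤ₊` by `σ 1 = 1` and `σ n = i j / 2` whenever
`i j ≤ n < i (j+1)`.

Then for every `a ∈ ℕ` and every positive integer `r`, given `m > 0` and `ε > 0`, there is a
positive integer `n = a + b * r` with `b ∈ ℕ` such that `n > m` and `|σ(n)/n - 1/2| < ε`.
-/
theorem sigma_ratio_near_half (i σ : ℕ → ℕ)
    (hipos : ∀ j, 1 ≤ j → 0 < i j)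
    (hi1 : i 1 = 2)
    (hieven : ∀ j, 1 ≤ j → Even (i (j + 1)))
    (higrow : ∀ j, 1 ≤ j → 2 ^ j * i j < i (j + 1))
    (hσ1 : σ 1 = 1)
    (hσ : ∀ j n, 1 ≤ j → i j ≤ n → n < i (j + 1) → σ n = i j / 2)
    (a : ℕ) (r : ℕ) (hr : 0 < r) (m : ℕ) (hm : 0 < m) (ε : ℝ) (hε : 0 < ε) :
    ∃ b : ℕ, m < a + b * r ∧
      |(σ (a + b * r) : ℝ) / (a + b * r) - 1 / 2| < ε := by
  -- `i j ≥ 2 ^ j`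
  have hpow : ∀ j, 1 ≤ j → 2 ^ j ≤ i j := by
    intro j hj
    induction j with
    | zero => omega
    | succ k ih =>
      rcases Nat.eq_or_lt_of_le hj with h | h
      · have : k = 0 := by omega
        subst this; simpa [hi1] using le_refl 2
      · have hk : 1 ≤ k := by omega
        have h1 := higrow k hk
        have h2 := ih hk
        have h3 : (2:ℕ) ≤ 2 ^ k := by
          calc (2:ℕ) = 2 ^ 1 := rfl
          _ ≤ 2 ^ k := Nat.pow_le_pow_right (by norm_num) hk
        calc 2 ^ (k+1) = 2 ^ k * 2 := by ring
        _ ≤ 2 ^ k * i k := Nat.mul_le_mul_left _ (le_trans h3 h2)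
        _ ≤ i (k+1) := le_of_lt h1
  -- pick M with r < M * ε
  obtain ⟨M, hM⟩ := exists_nat_gt ((r : ℝ) / ε)
  have hMε : (r : ℝ) < (M : ℝ) * ε := by
    rw [div_lt_iff₀ hε] at hM; linarith
  set K := max (max a m) (max r M) with hK
  set j := K + 2 with hj
  have hj1 : 1 ≤ j := by omega
  have hij : 2 ^ j ≤ i j := hpow j hj1
  have hjlt : j < 2 ^ j := Nat.lt_two_pow_self
  have hKlt : K < i j := by omega
  have ha : a < i j := lt_of_le_of_lt (le_trans (le_max_left _ _) (le_max_left _ _)) hKlt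
  have hmlt : m < i j := lt_of_le_of_lt (le_trans (le_max_right _ _) (le_max_left _ _)) hKlt
  have hrlt : r < i j := lt_of_le_of_lt (le_trans (le_max_left _ _) (le_max_right _ _)) hKlt
  have hMlt : M < i j := lt_of_le_of_lt (le_trans (le_max_right _ _) (le_max_right _ _)) hKlt
  -- choose b
  set d := i j - a with hd
  set b := (d + r - 1) / r with hb
  have h1 : b * r ≤ d + r - 1 := Nat.div_mul_le_self _ _
  have h2 : d + r - 1 < (b + 1) * r := by
    rw [hb]; exact (Nat.div_lt_iff_lt_mul hr).mp (Nat.lt_succ_self _)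
  have hdle : d ≤ b * r := by
    have h4 : d + r - 1 < b * r + r := by
      calc d + r - 1 < (b + 1) * r := h2
      _ = b * r + r := by ring
    omega
  have hge : i j ≤ a + b * r := by omega
  have hub : a + b * r < i j + r := by omega
  refine ⟨b, by omega, ?_⟩
  · set n := a + b * r with hn
    have hlt : n < i (j + 1) := by
      have h3 : 2 * i j ≤ 2 ^ j * i j :=
        Nat.mul_le_mul_right _ (le_trans (by norm_num : (2:ℕ) ≤ 2 ^ 2)
          (Nat.pow_le_pow_right (by norm_num) (by omega)))
      have h4 := higrow j hj1
      omega
    have hσn : σ n = i j / 2 := hσ j n hj1 hge hlt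
    obtain ⟨c, hc⟩ := hieven (K + 1) (by omega)
    have hcj : i j = c + c := hc
    have hσc : σ n = c := by omega
    -- real estimate
    have hNpos : (0:ℝ) < (n : ℝ) := by
      have : 0 < n := by omega
      exact_mod_cast this
    have hxN : (i j : ℝ) ≤ (n : ℝ) := by exact_mod_cast hge
    have hNx : ((n : ℝ)) < (i j : ℝ) + r := by exact_mod_cast hub
    have hrε : (r : ℝ) < ε * (i j : ℝ) := by
      have : (M : ℝ) ≤ (i j : ℝ) := by exact_mod_cast le_of_lt hMlt
      nlinarith
    have hx2c : (i j : ℝ) = 2 * (c : ℝ) := by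
      rw [hcj]; push_cast; ring
    rw [hσc]
    have hcast : (a : ℝ) + (b : ℝ) * (r : ℝ) = (n : ℝ) := by rw [hn]; push_cast; ring
    rw [hcast]
    have key : (c : ℝ) / (n : ℝ) - 1 / 2 = -(((n : ℝ) - (i j : ℝ)) / (2 * (n : ℝ))) := by
      rw [hx2c]; field_simp; ring
    rw [key, abs_neg, abs_of_nonneg (div_nonneg (by linarith) (by positivity))]
    rw [div_lt_iff₀ (by positivity)]
    nlinarith
end

section
/- With σ as defined from the sequence (i_j): for every a ∈ ℕ and every positive integer r, and for all m > 0 and ε > 0, there exists a positive integer n of the form n = a + br with b ∈ ℕ such that n > m and 0 < σ(n)/n < ε. -/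
/-!
Lemma `\ref{Lemma2}` of Cutkosky, "The asymptotic growth of graded linear series on
arbitrary projective schemes".

Fix a sequence of positive integers `(i_j)_{j ≥ 1}` with `i 1 = 2`, each `i (j+1)` even and
`i (j+1) > 2^j * i j`.  Define `σ : ℤ₊ → ℤ₊` by `σ 1 = 1` and `σ n = i j / 2` whenever
`i j ≤ n < i (j+1)`.

Then for every `a ∈ ℕ` and every positive integer `r`, given `m > 0` and `ε > 0`, there is a
positive integer `n = a + b * r` with `b ∈ ℕ` such that `n > m` and `0 < σ(n)/n < ε`.
-/
theorem sigma_ratio_near_zero (i σ : ℕ → ℕ)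
    (hipos : ∀ j, 1 ≤ j → 0 < i j)
    (hi1 : i 1 = 2)
    (hieven : ∀ j, 1 ≤ j → Even (i (j + 1)))
    (higrow : ∀ j, 1 ≤ j → 2 ^ j * i j < i (j + 1))
    (hσ1 : σ 1 = 1)
    (hσ : ∀ j n, 1 ≤ j → i j ≤ n → n < i (j + 1) → σ n = i j / 2)
    (a : ℕ) (r : ℕ) (hr : 0 < r) (m : ℕ) (hm : 0 < m) (ε : ℝ) (hε : 0 < ε) :
    ∃ b : ℕ, m < a + b * r ∧
      0 < (σ (a + b * r) : ℝ) / (a + b * r) ∧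
      (σ (a + b * r) : ℝ) / (a + b * r) < ε := by
  -- i j ≥ 2 for all j ≥ 1
  have hi2 : ∀ j, 1 ≤ j → 2 ≤ i j := by
    intro j hj
    induction j with
    | zero => omega
    | succ k ih =>
      rcases Nat.lt_or_ge 1 (k + 1) with h | h
      · have hk : 1 ≤ k := by omega
        have h1 := higrow k hk
        have h2 := ih hk
        have h3 : 1 ≤ 2 ^ k := Nat.one_le_two_pow
        nlinarith
      · have : k = 0 := by omega
        subst this; simp [hi1]
  -- choose a suitable exponent j
  obtain ⟨k1, hk1⟩ := pow_unbounded_of_one_lt (a + m + r + 2) (by norm_num : (1:ℕ) < 2)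
  obtain ⟨k2, hk2⟩ := exists_pow_lt_of_lt_one hε (by norm_num : (1/2:ℝ) < 1)
  set j := max k1 k2 + 1 with hjdef
  have hj1 : 1 ≤ j := Nat.le_add_left 1 _
  have hB : a + m + r + 2 ≤ 2 ^ j :=
    le_trans hk1.le (Nat.pow_le_pow_right (by norm_num) (by omega))
  have hεj : ((1:ℝ)/2) ^ j < ε :=
    lt_of_le_of_lt (pow_le_pow_of_le_one (by norm_num) (by norm_num) (by omega)) hk2
  have hij : 2 ≤ i j := hi2 j hj1
  have hI : 2 ^ j * i j + 1 ≤ i (j + 1) := higrow j hj1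
  -- abbreviations and key nat inequalities
  have hij1 : i j ≤ 2 ^ (j-1) * i j := Nat.le_mul_of_pos_left _ (Nat.pow_pos (by norm_num))
  have hPsplit : 2 ^ j = 2 * 2 ^ (j - 1) := by
    calc 2 ^ j = 2 ^ ((j - 1) + 1) := by rw [Nat.sub_add_cancel hj1]
    _ = 2 * 2 ^ (j - 1) := by rw [pow_succ]; ring
  have h2j1 : 2 ^ (j - 1) ≤ 2 ^ (j - 1) * i j := Nat.le_mul_of_pos_right _ (by omega)
  have hQ : 2 ^ j * i j = 2 * (2 ^ (j - 1) * i j) := by rw [hPsplit]; ring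
  have hP2 : 2 ^ j ≤ 2 ^ (j - 1) * i j := by
    calc 2 ^ j = 2 ^ (j-1) * 2 := by rw [hPsplit]; ring
    _ ≤ 2 ^ (j-1) * i j := Nat.mul_le_mul_left _ hij
  -- pick b so that n = a + b*r lands in [i (j+1) - r, i (j+1))
  set b := (i (j + 1) - 1 - a) / r with hbdef
  refine ⟨b, ?_⟩
  set n := a + b * r with hndef
  have haI : a + 1 ≤ i (j + 1) := by
    have : 2 * 2 ^ j ≤ 2 ^ j * i j := by nlinarith
    omega
  obtain ⟨c, s, hcs, hslt, hbrc⟩ : ∃ c s, c + s = i (j + 1) - 1 - a ∧ s < r ∧ b * r = c :=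
    ⟨r * ((i (j + 1) - 1 - a) / r), (i (j + 1) - 1 - a) % r,
      Nat.div_add_mod _ _, Nat.mod_lt _ hr, by rw [hbdef, mul_comm]⟩
  have hnc : n = a + c := by rw [hndef, hbrc]
  -- n < i (j+1) and n ≥ i (j+1) - r
  have hnub : n < i (j + 1) := by omega
  have hnlb : i (j + 1) - r ≤ n := by omega
  -- r is small compared to 2^(j-1) * i j
  have hrQ : r ≤ 2 ^ (j - 1) * i j := by omega
  have hQn : 2 ^ (j - 1) * i j < n := by
    have h1 : 2 * (2 ^ (j-1) * i j) + 1 ≤ i (j + 1) := by omega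
    omega
  have hin : i j ≤ n := by omega
  have hmn : m < n := by
    have : 2 * 2 ^ j ≤ 2 ^ j * i j := by nlinarith
    omega
  have hσn : σ n = i j / 2 := hσ j n hj1 hin hnub
  -- i j is even
  have hevenij : 2 * (i j / 2) = i j := by
    have hev : Even (i j) := by
      rcases Nat.lt_or_ge 1 j with h | h
      · have : j = (j - 1) + 1 := by omega
        rw [this]; exact hieven (j - 1) (by omega)
      · have : j = 1 := by omega
        rw [this, hi1]; exact even_two
    obtain ⟨t, ht⟩ := hev; omega
  have hσpos : 0 < σ n := by omega
  -- key nat inequality: 2^j * σ n < n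
  have hkey : σ n * 2 ^ j < n := by
    have : σ n * 2 ^ j = 2 ^ (j - 1) * i j := by
      rw [hσn, hPsplit]
      calc i j / 2 * (2 * 2 ^ (j-1)) = 2 ^ (j-1) * (2 * (i j / 2)) := by ring
      _ = 2 ^ (j-1) * i j := by rw [hevenij]
    omega
  -- conclude over ℝ
  have hnpos : (0:ℝ) < (n:ℝ) := by exact_mod_cast (by omega : 0 < n)
  have hc2 : ((a:ℝ) + (b:ℝ) * (r:ℝ)) = (n:ℝ) := by rw [hndef]; push_cast; ring
  rw [hc2]
  refine ⟨by omega, ?_, ?_⟩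
  · exact div_pos (by exact_mod_cast hσpos) hnpos
  · have h2pos : (0:ℝ) < 2 ^ j := by positivity
    have hlt : (σ n : ℝ) * 2 ^ j < (n:ℝ) := by exact_mod_cast hkey
    calc (σ n : ℝ) / n < (1/2) ^ j := by
          rw [div_lt_iff₀ hnpos, one_div, inv_pow, ← div_eq_inv_mul, lt_div_iff₀ h2pos]
          exact hlt
    _ < ε := hεj
end

section
/- With σ as defined from the sequence (i_j): for every a ∈ ℕ and every positive integer r, the limit lim_{b→∞} σ(a+br)/(a+br) does not exist; that is, the sequence σ(n)/n has no limit even when n is constrained to lie in any arithmetic sequence a + br. -/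
open Filter

/-- In any window `[m, m + r)` with `m > a` there is a term of the arithmetic
progression `a + b * r`. -/
lemma window_lower (a r m : ℕ) (hr : 0 < r) (ha : a < m) :
    ∃ b, m ≤ a + b * r ∧ a + b * r < m + r := by
  obtain ⟨q, u, hu, hx⟩ : ∃ q u, u < r ∧ m - a + r - 1 = r * q + u :=
    ⟨_, _, Nat.mod_lt _ hr, (Nat.div_add_mod _ r).symm⟩
  refine ⟨q, ?_, ?_⟩ <;> rw [Nat.mul_comm q r] <;>
    · set p := r * q with hp
      omega

/-- In any window `(M - r, M)` (i.e. `[M - r, M)`) with `M > a` there is a term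
of the arithmetic progression `a + b * r`. -/
lemma window_upper (a r M : ℕ) (hr : 0 < r) (ha : a < M) :
    ∃ b, M - r ≤ a + b * r ∧ a + b * r < M := by
  obtain ⟨q, u, hu, hx⟩ : ∃ q u, u < r ∧ M - 1 - a = r * q + u :=
    ⟨_, _, Nat.mod_lt _ hr, (Nat.div_add_mod _ r).symm⟩
  refine ⟨q, ?_, ?_⟩ <;> rw [Nat.mul_comm q r] <;>
    · set p := r * q with hp
      omega

/-!
Cutkosky, "The asymptotic growth of graded linear series on arbitrary projective schemes":
the observation following Lemmas `\ref{Lemma1}` and `\ref{Lemma2}`.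

Fix a sequence of positive integers `(i_j)_{j ≥ 1}` with `i 1 = 2`, each `i (j+1)` even and
`i (j+1) > 2^j * i j`.  Define `σ : ℤ₊ → ℤ₊` by `σ 1 = 1` and `σ n = i j / 2` whenever
`i j ≤ n < i (j+1)`.

Then `lim_{n → ∞} σ(n)/n` does not exist, even when `n` is constrained to lie in any
arithmetic sequence `a + b * r` (`r > 0`, `b → ∞`).
-/
theorem sigma_ratio_no_limit_on_arithmetic_sequences (i σ : ℕ → ℕ)
    (hipos : ∀ j, 1 ≤ j → 0 < i j)
    (hi1 : i 1 = 2)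
    (hieven : ∀ j, 1 ≤ j → Even (i (j + 1)))
    (higrow : ∀ j, 1 ≤ j → 2 ^ j * i j < i (j + 1))
    (hσ1 : σ 1 = 1)
    (hσ : ∀ j n, 1 ≤ j → i j ≤ n → n < i (j + 1) → σ n = i j / 2)
    (a : ℕ) (r : ℕ) (hr : 0 < r) :
    ¬ ∃ c : ℝ, Tendsto (fun b : ℕ => (σ (a + b * r) : ℝ) / (a + b * r)) atTop (nhds c) := by
  rintro ⟨c, hc⟩
  -- `i j ≥ 2 ^ j` for `j ≥ 1`
  have hipow : ∀ j, 1 ≤ j → 2 ^ j ≤ i j := by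
    intro j hj
    induction j with
    | zero => omega
    | succ k ih =>
      rcases Nat.lt_or_ge k 1 with h1 | h1
      · interval_cases k
        simpa [hi1] using le_refl 2
      · have h2 : 2 ≤ 2 ^ k := by
          calc 2 = 2 ^ 1 := rfl
          _ ≤ 2 ^ k := Nat.pow_le_pow_right (by norm_num) h1
        have h3 : 2 ^ (k + 1) ≤ 2 ^ k * i k := by
          rw [pow_succ]
          exact Nat.mul_le_mul_left _ (le_trans h2 (ih h1))
        exact le_of_lt (lt_of_le_of_lt h3 (higrow k h1))
  -- all `i j` with `j ≥ 1` are even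
  have hevenJ : ∀ j, 1 ≤ j → Even (i j) := by
    intro j hj
    match j, hj with
    | 1, _ => rw [hi1]; exact even_two
    | (k+2), _ => exact hieven (k+1) (by omega)
  rw [Metric.tendsto_atTop] at hc
  obtain ⟨N, hN⟩ := hc (1/16) (by norm_num)
  set J := a + N * r + r + 3 with hJdef
  have hJ1 : 1 ≤ J := by omega
  have hJlt : J < 2 ^ J := Nat.lt_two_pow_self
  have hiJ : 2 ^ J ≤ i J := hipow J hJ1
  have hJbig : a + N * r + r + 3 ≤ i J := by omega
  have h8 : 8 ≤ 2 ^ J := by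
    calc (8:ℕ) = 2 ^ 3 := rfl
    _ ≤ 2 ^ J := Nat.pow_le_pow_right (by norm_num) (by omega)
  have h8i : 8 * i J ≤ 2 ^ J * i J := Nat.mul_le_mul_right _ h8
  have hgl : 2 ^ J * i J < i (J + 1) := higrow J hJ1
  have h8i' : 8 * i J < i (J + 1) := lt_of_le_of_lt h8i hgl
  have hiJ8 : 8 ≤ i J := le_trans h8 hiJ
  obtain ⟨k, hk⟩ := hevenJ J hJ1
  have hhalf : i J / 2 = k := by omega
  -- first point: a + b * r ∈ [i J, i J + r)
  obtain ⟨b, hb1, hb2⟩ := window_lower a r (i J) hr (by omega)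
  have hn1lt : a + b * r < i (J + 1) := by omega
  have hσ1' : σ (a + b * r) = k := by rw [hσ J (a + b * r) hJ1 hb1 hn1lt, hhalf]
  have hbN : N ≤ b := by
    by_contra hcon
    push_neg at hcon
    have : b * r ≤ N * r := Nat.mul_le_mul_right r (le_of_lt hcon)
    omega
  -- second point: a + b' * r ∈ [i (J+1) - r, i (J+1))
  obtain ⟨b', hb'1, hb'2⟩ := window_upper a r (i (J + 1)) hr (by omega)
  have hn2ge : i J ≤ a + b' * r := by omega
  have hn2ge4 : 4 * i J ≤ a + b' * r := by omega
  have hσ2' : σ (a + b' * r) = k := by rw [hσ J (a + b' * r) hJ1 hn2ge hb'2, hhalf]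
  have hb'N : N ≤ b' := by
    by_contra hcon
    push_neg at hcon
    have : b' * r ≤ N * r := Nat.mul_le_mul_right r (le_of_lt hcon)
    omega
  -- real estimates
  have hkK : (k:ℝ) * 2 = (i J : ℝ) := by exact_mod_cast (by omega : k * 2 = i J)
  have h1 := hN b hbN
  have h2 := hN b' hb'N
  simp only [hσ1', Real.dist_eq] at h1
  simp only [hσ2', Real.dist_eq] at h2
  have hx1pos : (0:ℝ) < (a:ℝ) + (b:ℝ) * (r:ℝ) := by
    have hnat : 1 ≤ a + b * r := by omega
    have := (Nat.cast_le (α := ℝ)).mpr hnat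
    push_cast at this
    linarith
  have hx2pos : (0:ℝ) < (a:ℝ) + (b':ℝ) * (r:ℝ) := by
    have hnat : 1 ≤ a + b' * r := by omega
    have := (Nat.cast_le (α := ℝ)).mpr hnat
    push_cast at this
    linarith
  have hx1le : (a:ℝ) + (b:ℝ) * (r:ℝ) ≤ 2 * (i J : ℝ) := by
    have hnat : a + b * r ≤ 2 * i J := by omega
    have := (Nat.cast_le (α := ℝ)).mpr hnat
    push_cast at this
    linarith
  have hx2ge : 4 * (i J : ℝ) ≤ (a:ℝ) + (b':ℝ) * (r:ℝ) := by
    have := (Nat.cast_le (α := ℝ)).mpr hn2ge4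
    push_cast at this
    linarith
  have key1 : (1:ℝ)/4 ≤ (k:ℝ) / ((a:ℝ) + (b:ℝ) * (r:ℝ)) := by
    rw [le_div_iff₀ hx1pos]
    linarith
  have key2 : (k:ℝ) / ((a:ℝ) + (b':ℝ) * (r:ℝ)) ≤ 1/8 := by
    rw [div_le_iff₀ hx2pos]
    linarith
  rw [abs_sub_lt_iff] at h1 h2
  linarith [h1.1, h1.2, h2.1, h2.2]
end

section
/- Let d ≥ 1 and define f(n) = C(d+n, d) + C(d+n+σ(n)−1, d) for positive integers n. Then for every a ∈ ℕ and every positive integer r, the limit lim_{b→∞} f(a+br)/(a+br)^d does not exist. (Consequently, for the graded linear series L on the double hyperplane X = Proj(k[x_0,…,x_{d+1}]/(x_1²)) with dim_k L_n = f(n), the limit of dim_k L_n / n^d does not exist even when n is constrained to lie in any arithmetic sequence.) -/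
open Filter

lemma pow_le_fact_mul_choose (d n : ℕ) : n ^ d ≤ d.factorial * (d + n).choose d :=
  calc n ^ d ≤ (n + 1) ^ d := Nat.pow_le_pow_left (Nat.le_succ n) d
    _ ≤ (n + 1).ascFactorial d := Nat.pow_succ_le_ascFactorial _ _
    _ = d.factorial * (n + d).choose d := Nat.ascFactorial_eq_factorial_mul_choose n d
    _ = d.factorial * (d + n).choose d := by rw [Nat.add_comm n d]

lemma fact_mul_choose_le_pow (d n : ℕ) : d.factorial * (d + n).choose d ≤ (n + d) ^ d :=
  calc d.factorial * (d + n).choose d = (n + 1).ascFactorial d := by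
        rw [Nat.ascFactorial_eq_factorial_mul_choose, Nat.add_comm n d]
    _ ≤ (n + d) ^ d := Nat.ascFactorial_le_pow_add n d


/-!
Cutkosky, "The asymptotic growth of graded linear series on arbitrary projective schemes",
the computation in Example `\ref{Example25}`.

Fix a sequence of positive integers `(i_j)_{j ≥ 1}` with `i 1 = 2`, each `i (j+1)` even and
`i (j+1) > 2^j * i j`.  Define `σ : ℤ₊ → ℤ₊` by `σ 1 = 1` and `σ n = i j / 2` whenever
`i j ≤ n < i (j+1)`.

Let `d ≥ 1` and let `f n = C(d+n, d) + C(d+n+σ(n)-1, d)`.  (For the graded linear series `L`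
on the double linear hyperplane `X = Proj (k[x₀,…,x_{d+1}]/(x₁²))` of Example 25 one has
`dim_k L_n = f n`.)  Then for every `a ∈ ℕ` and every positive integer `r`, the limit
`lim_{b → ∞} f (a + b*r) / (a + b*r)^d` does not exist; that is, the limit of
`dim_k L_n / n^d` does not exist even when `n` is constrained to lie in any arithmetic
sequence.
-/
set_option maxHeartbeats 1000000 in
theorem binomial_growth_no_limit_on_arithmetic_sequences (i σ : ℕ → ℕ)
    (hipos : ∀ j, 1 ≤ j → 0 < i j)
    (hi1 : i 1 = 2)
    (hieven : ∀ j, 1 ≤ j → Even (i (j + 1)))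
    (higrow : ∀ j, 1 ≤ j → 2 ^ j * i j < i (j + 1))
    (hσ1 : σ 1 = 1)
    (hσ : ∀ j n, 1 ≤ j → i j ≤ n → n < i (j + 1) → σ n = i j / 2)
    (d : ℕ) (hd : 1 ≤ d)
    (f : ℕ → ℕ)
    (hf : ∀ n, f n = (d + n).choose d + (d + n + σ n - 1).choose d)
    (a : ℕ) (r : ℕ) (hr : 0 < r) :
    ¬ ∃ c : ℝ, Tendsto (fun b : ℕ => (f (a + b * r) : ℝ) / (a + b * r) ^ d)
        atTop (nhds c) := by
  rintro ⟨c, hc⟩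
  -- growth of i
  have hige : ∀ j : ℕ, 2 ^ (j + 1) ≤ i (j + 1) := by
    intro j
    induction j with
    | zero => simp [hi1]
    | succ k ih =>
      have h : 2 ^ (k + 1) * i (k + 1) < i (k + 2) := higrow (k + 1) (by omega)
      have h3 : (2 : ℕ) ≤ 2 ^ (k + 1) := by
        have := Nat.one_lt_two_pow (n := k + 1) (by omega); omega
      calc 2 ^ (k + 1 + 1) = 2 ^ (k + 1) * 2 := by ring
        _ ≤ 2 ^ (k + 1) * i (k + 1) := Nat.mul_le_mul_left _ (le_trans h3 ih)
        _ ≤ i (k + 1 + 1) := le_of_lt h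
  have hhalf : ∀ j : ℕ, 2 * (i (j + 1) / 2) = i (j + 1) := by
    intro j
    cases j with
    | zero => simp only [Nat.zero_add, hi1]
    | succ k => obtain ⟨m, hm⟩ := hieven (k + 1) (by omega); omega
  have hgap : ∀ j : ℕ, i (j + 1) + 2 ^ (j + 1) ≤ i (j + 2) := by
    intro j
    have h : 2 ^ (j + 1) * i (j + 1) < i (j + 2) := higrow (j + 1) (by omega)
    have h1 := hige j
    have h3 : (2 : ℕ) ≤ 2 ^ (j + 1) := by
      have := Nat.one_lt_two_pow (n := j + 1) (by omega); omega
    have h4 : 2 * i (j + 1) ≤ 2 ^ (j + 1) * i (j + 1) :=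
      Nat.mul_le_mul_right _ h3
    omega
  set J : ℕ := a + r + 2 with hJdef
  have hbig : ∀ j : ℕ, J ≤ j → a + r + 2 ≤ 2 ^ (j + 1) := by
    intro j hj
    have := Nat.lt_two_pow_self (n := j + 1)
    omega
  -- the two subsequences
  set bA : ℕ → ℕ := fun j => (i (j + 1) - a) / r + 1 with hbAdef
  set bB : ℕ → ℕ := fun j => (i (j + 2) - a - 1) / r with hbBdef
  -- positions
  have hposA : ∀ j : ℕ, J ≤ j →
      i (j + 1) < a + bA j * r ∧ a + bA j * r ≤ i (j + 1) + r := by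
    intro j hj
    have hia : a + r + 2 ≤ i (j + 1) := le_trans (hbig j hj) (hige j)
    have hd1 := Nat.div_add_mod (i (j + 1) - a) r
    have hd2 := Nat.mod_lt (i (j + 1) - a) hr
    have e : bA j * r = r * ((i (j + 1) - a) / r) + r := by
      simp only [hbAdef]; ring
    omega
  have hposB : ∀ j : ℕ, J ≤ j →
      i (j + 2) ≤ a + bB j * r + r ∧ a + bB j * r < i (j + 2) := by
    intro j hj
    have hia : a + r + 2 ≤ i (j + 1) := le_trans (hbig j hj) (hige j)
    have h20 : (1:ℕ) ≤ 2 ^ j := Nat.one_le_two_pow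
    have hia2 : i (j + 1) < i (j + 2) := by have := hgap j; have := hige j; omega
    have hd1 := Nat.div_add_mod (i (j + 2) - a - 1) r
    have hd2 := Nat.mod_lt (i (j + 2) - a - 1) hr
    have e : bB j * r = r * ((i (j + 2) - a - 1) / r) := by
      simp only [hbBdef]; ring
    omega
  have hrangeA : ∀ j : ℕ, J ≤ j →
      i (j + 1) ≤ a + bA j * r ∧ a + bA j * r < i (j + 2) := by
    intro j hj
    obtain ⟨h1, h2⟩ := hposA j hj
    have h20 : (1:ℕ) ≤ 2 ^ j := Nat.one_le_two_pow
    have := hgap j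
    have := hbig j hj
    omega
  have hrangeB : ∀ j : ℕ, J ≤ j →
      i (j + 1) ≤ a + bB j * r ∧ a + bB j * r < i (j + 2) := by
    intro j hj
    obtain ⟨h1, h2⟩ := hposB j hj
    have h20 : (1:ℕ) ≤ 2 ^ j := Nat.one_le_two_pow
    have := hgap j
    have := hbig j hj
    omega
  have hσA : ∀ j : ℕ, J ≤ j → σ (a + bA j * r) = i (j + 1) / 2 := fun j hj =>
    hσ (j + 1) _ (by omega) (hrangeA j hj).1 (hrangeA j hj).2
  have hσB : ∀ j : ℕ, J ≤ j → σ (a + bB j * r) = i (j + 1) / 2 := fun j hj =>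
    hσ (j + 1) _ (by omega) (hrangeB j hj).1 (hrangeB j hj).2
  -- bA, bB → ∞
  have hbAtop : Tendsto bA atTop atTop := by
    rw [tendsto_atTop_atTop]
    intro M
    refine ⟨a + M * r, fun j hj => ?_⟩
    have h2p := Nat.lt_two_pow_self (n := j + 1)
    have hij := hige j
    have h1 : M * r ≤ i (j + 1) - a := by omega
    have h2 : M ≤ (i (j + 1) - a) / r := (Nat.le_div_iff_mul_le hr).mpr h1
    simp only [hbAdef]; omega
  have hbBtop : Tendsto bB atTop atTop := by
    rw [tendsto_atTop_atTop]
    intro M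
    refine ⟨a + M * r + 1, fun j hj => ?_⟩
    have h2p := Nat.lt_two_pow_self (n := j + 2)
    have hij : 2 ^ (j + 2) ≤ i (j + 2) := hige (j + 1)
    have h1 : M * r ≤ i (j + 2) - a - 1 := by omega
    have h2 : M ≤ (i (j + 2) - a - 1) / r := (Nat.le_div_iff_mul_le hr).mpr h1
    simp only [hbBdef]; omega
  -- the normalized sequence
  set F : ℕ → ℝ := fun n => (d.factorial : ℝ) * ((f n : ℝ) / (n : ℝ) ^ d) with hFdef
  have hFA : Tendsto (fun j => F (a + bA j * r)) atTop (nhds ((d.factorial : ℝ) * c)) := by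
    have := (hc.comp hbAtop).const_mul (d.factorial : ℝ)
    refine this.congr fun j => ?_
    simp only [Function.comp, hFdef]
    push_cast
    ring
  have hFB : Tendsto (fun j => F (a + bB j * r)) atTop (nhds ((d.factorial : ℝ) * c)) := by
    have := (hc.comp hbBtop).const_mul (d.factorial : ℝ)
    refine this.congr fun j => ?_
    simp only [Function.comp, hFdef]
    push_cast
    ring
  -- lower bound along A
  have hboundA : ∀ j : ℕ, J ≤ j →
      1 + (3 / 2 - ((r : ℝ) + 2) / 2 ^ (j + 2)) ^ d ≤ F (a + bA j * r) := by
    intro j hj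
    set n : ℕ := a + bA j * r with hn
    obtain ⟨h1, h2⟩ := hposA j hj
    have hσn : σ n = i (j + 1) / 2 := hσA j hj
    have hhalfn : 2 * σ n = i (j + 1) := by rw [hσn]; exact hhalf j
    have hn2 : 2 ^ (j + 1) ≤ n := le_trans (hige j) (le_of_lt h1)
    have hn1 : 1 ≤ n := by have := Nat.one_le_two_pow (n := j + 1); omega
    have hc1 : n ^ d ≤ d.factorial * (d + n).choose d := pow_le_fact_mul_choose d n
    have hc2 : (n + σ n - 1) ^ d ≤ d.factorial * (d + n + σ n - 1).choose d := by
      have e : d + n + σ n - 1 = d + (n + σ n - 1) := by omega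
      rw [e]; exact pow_le_fact_mul_choose d _
    set N : ℝ := (n : ℝ) with hN
    set S : ℝ := (σ n : ℝ) with hS
    set P : ℝ := (2 : ℝ) ^ (j + 1) with hPdef
    have hPP : (2 : ℝ) ^ (j + 2) = 2 * P := by rw [hPdef, pow_succ]; ring
    have hP : (0 : ℝ) < P := by positivity
    have hNpos : (0 : ℝ) < N := by rw [hN]; exact_mod_cast Nat.pos_of_ne_zero (by omega)
    have hN1 : (1 : ℝ) ≤ N := by rw [hN]; exact_mod_cast hn1
    have hN2 : P ≤ N := by rw [hN, hPdef]; exact_mod_cast hn2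
    have hSr : N ≤ 2 * S + r := by
      rw [hN, hS]; exact_mod_cast (show n ≤ 2 * σ n + r by omega)
    have hrP : (r : ℝ) + 2 ≤ P := by
      rw [hPdef]; exact_mod_cast (show r + 2 ≤ 2 ^ (j + 1) by have := hbig j hj; omega)
    rw [hPP]
    set Q : ℝ := ((r : ℝ) + 2) / (2 * P) with hQdef
    have hQ0 : 0 ≤ Q := by positivity
    have hQP : Q * (2 * P) = (r : ℝ) + 2 := div_mul_cancel₀ _ (by positivity)
    have hQhalf : Q ≤ 1 / 2 := by nlinarith
    set β : ℝ := 3 / 2 - Q with hβdef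
    have hβ0 : 0 ≤ β := by rw [hβdef]; linarith
    have hβN : β * N ≤ N + S - 1 := by
      have hQN : Q * P ≤ Q * N := mul_le_mul_of_nonneg_left hN2 hQ0
      rw [hβdef]; nlinarith
    have hNd : (0 : ℝ) < N ^ d := by positivity
    simp only [hFdef]
    rw [← mul_div_assoc, le_div_iff₀ hNd]
    have hfn : (d.factorial : ℝ) * (f n : ℝ) =
        (d.factorial : ℝ) * ((d + n).choose d : ℝ)
          + (d.factorial : ℝ) * ((d + n + σ n - 1).choose d : ℝ) := by
      rw [hf n]; push_cast; ring
    have t1 : N ^ d ≤ (d.factorial : ℝ) * ((d + n).choose d : ℝ) := by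
      rw [hN]; exact_mod_cast hc1
    have hcast : ((n + σ n - 1 : ℕ) : ℝ) = N + S - 1 := by
      rw [Nat.cast_sub (by omega : 1 ≤ n + σ n)]; push_cast; rw [hN, hS]
    have t2 : (N + S - 1) ^ d ≤ (d.factorial : ℝ) * ((d + n + σ n - 1).choose d : ℝ) := by
      rw [← hcast]; exact_mod_cast hc2
    have t3 : β ^ d * N ^ d ≤ (N + S - 1) ^ d := by
      rw [← mul_pow]
      exact pow_le_pow_left₀ (mul_nonneg hβ0 (le_of_lt hNpos)) hβN d
    have expand : (1 + β ^ d) * N ^ d = N ^ d + β ^ d * N ^ d := by ring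
    rw [hfn, expand]
    linarith
  -- upper bound along B
  have hboundB : ∀ j : ℕ, J ≤ j →
      F (a + bB j * r) ≤ 2 * (1 + (2 * (d : ℝ) + r + 1) / 2 ^ (j + 2)) ^ d := by
    intro j hj
    set n : ℕ := a + bB j * r with hn
    obtain ⟨h1, h2⟩ := hposB j hj
    have hrg := hrangeB j hj
    have hσn : σ n = i (j + 1) / 2 := hσB j hj
    have hhalfn : 2 * σ n = i (j + 1) := by rw [hσn]; exact hhalf j
    have hkey : 2 ^ (j + 2) * σ n ≤ n + r := by
      have hg : 2 ^ (j + 1) * i (j + 1) < i (j + 2) := higrow (j + 1) (by omega)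
      calc 2 ^ (j + 2) * σ n = 2 ^ (j + 1) * (2 * σ n) := by ring
        _ = 2 ^ (j + 1) * i (j + 1) := by rw [hhalfn]
        _ ≤ n + r := by omega
    have hn2 : 2 ^ (j + 1) ≤ n := le_trans (hige j) hrg.1
    have hn1 : 1 ≤ n := by have := Nat.one_le_two_pow (n := j + 1); omega
    have hc1 : d.factorial * (d + n).choose d ≤ (n + d) ^ d := fact_mul_choose_le_pow d n
    have hc2 : d.factorial * (d + n + σ n - 1).choose d ≤ (n + σ n + d) ^ d := by
      have e : d + n + σ n - 1 = d + (n + σ n - 1) := by omega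
      rw [e]
      exact le_trans (fact_mul_choose_le_pow d _) (Nat.pow_le_pow_left (by omega) d)
    set N : ℝ := (n : ℝ) with hN
    set S : ℝ := (σ n : ℝ) with hS
    set P : ℝ := (2 : ℝ) ^ (j + 1) with hPdef
    have hPP : (2 : ℝ) ^ (j + 2) = 2 * P := by rw [hPdef, pow_succ]; ring
    have hP : (0 : ℝ) < P := by positivity
    have hNpos : (0 : ℝ) < N := by rw [hN]; exact_mod_cast Nat.pos_of_ne_zero (by omega)
    have hN1 : (1 : ℝ) ≤ N := by rw [hN]; exact_mod_cast hn1
    have hN2 : P ≤ N := by rw [hN, hPdef]; exact_mod_cast hn2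
    have hS0 : 0 ≤ S := by rw [hS]; positivity
    have hd0 : (0 : ℝ) ≤ (d : ℝ) := by positivity
    have hr1 : (1 : ℝ) ≤ (r : ℝ) := by exact_mod_cast hr
    have hSP : 2 * P * S ≤ N + r := by
      have := hkey
      have hcst : ((2 ^ (j + 2) * σ n : ℕ) : ℝ) ≤ ((n + r : ℕ) : ℝ) := by exact_mod_cast this
      push_cast at hcst
      rw [hPP] at hcst
      exact hcst
    rw [hPP]
    set K : ℝ := 2 * (d : ℝ) + r + 1 with hKdef
    have hM0 : (S + (d : ℝ)) * (2 * P) ≤ K * N := by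
      have hPd : P * (d : ℝ) ≤ N * (d : ℝ) := mul_le_mul_of_nonneg_right hN2 hd0
      have hrN : (r : ℝ) * 1 ≤ (r : ℝ) * N := mul_le_mul_of_nonneg_left hN1 (by linarith)
      rw [hKdef]; nlinarith
    have hM : N + S + (d : ℝ) ≤ (1 + K / (2 * P)) * N := by
      have h2P : (0 : ℝ) < 2 * P := by linarith
      have := (le_div_iff₀ h2P).mpr hM0
      have e : (1 + K / (2 * P)) * N = N + K * N / (2 * P) := by ring
      rw [e]; linarith
    have hNd : (0 : ℝ) < N ^ d := by positivity
    simp only [hFdef]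
    rw [← mul_div_assoc, div_le_iff₀ hNd]
    have hfn : (d.factorial : ℝ) * (f n : ℝ) =
        (d.factorial : ℝ) * ((d + n).choose d : ℝ)
          + (d.factorial : ℝ) * ((d + n + σ n - 1).choose d : ℝ) := by
      rw [hf n]; push_cast; ring
    have u1 : (d.factorial : ℝ) * ((d + n).choose d : ℝ) ≤ (N + (d : ℝ)) ^ d := by
      rw [hN]; exact_mod_cast hc1
    have u2 : (d.factorial : ℝ) * ((d + n + σ n - 1).choose d : ℝ)
        ≤ (N + S + (d : ℝ)) ^ d := by
      rw [hN, hS]; exact_mod_cast hc2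
    have w1 : (N + (d : ℝ)) ^ d ≤ ((1 + K / (2 * P)) * N) ^ d :=
      pow_le_pow_left₀ (by linarith) (by linarith) d
    have w2 : (N + S + (d : ℝ)) ^ d ≤ ((1 + K / (2 * P)) * N) ^ d :=
      pow_le_pow_left₀ (by linarith) hM d
    have expand : 2 * (1 + K / (2 * P)) ^ d * N ^ d
        = ((1 + K / (2 * P)) * N) ^ d + ((1 + K / (2 * P)) * N) ^ d := by
      rw [mul_pow]; ring
    rw [hfn, expand]
    linarith
  -- limits of the bounding sequences
  have hP2top : Tendsto (fun j : ℕ => (2 : ℝ) ^ (j + 2)) atTop atTop :=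
    (tendsto_pow_atTop_atTop_of_one_lt (by norm_num : (1 : ℝ) < 2)).comp
      (tendsto_add_atTop_nat 2)
  have hz1 : Tendsto (fun j : ℕ => ((r : ℝ) + 2) / 2 ^ (j + 2)) atTop (nhds 0) :=
    tendsto_const_nhds.div_atTop hP2top
  have hz2 : Tendsto (fun j : ℕ => (2 * (d : ℝ) + r + 1) / 2 ^ (j + 2)) atTop (nhds 0) :=
    tendsto_const_nhds.div_atTop hP2top
  have hLB : Tendsto (fun j : ℕ => 1 + (3 / 2 - ((r : ℝ) + 2) / 2 ^ (j + 2)) ^ d) atTop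
      (nhds (1 + (3 / 2 : ℝ) ^ d)) := by
    have h1 := ((tendsto_const_nhds (x := (3 / 2 : ℝ)) (f := atTop)).sub hz1).pow d
    have h2 := (tendsto_const_nhds (x := (1 : ℝ)) (f := atTop)).add h1
    simpa using h2
  have hUB : Tendsto (fun j : ℕ => 2 * (1 + (2 * (d : ℝ) + r + 1) / 2 ^ (j + 2)) ^ d) atTop
      (nhds 2) := by
    have h1 := (((tendsto_const_nhds (x := (1 : ℝ)) (f := atTop)).add hz2).pow d).const_mul
      (2 : ℝ)
    simpa using h1
  have hA' : 1 + (3 / 2 : ℝ) ^ d ≤ (d.factorial : ℝ) * c :=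
    le_of_tendsto_of_tendsto hLB hFA (eventually_atTop.mpr ⟨J, hboundA⟩)
  have hB' : (d.factorial : ℝ) * c ≤ 2 :=
    le_of_tendsto_of_tendsto hFB hUB (eventually_atTop.mpr ⟨J, hboundB⟩)
  have h32 : (3 / 2 : ℝ) ≤ (3 / 2) ^ d := by
    calc (3 / 2 : ℝ) = (3 / 2) ^ 1 := (pow_one _).symm
      _ ≤ (3 / 2) ^ d := pow_le_pow_right₀ (by norm_num) hd
  linarith
end
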